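/- arXiv:2103.09376 — 3 statements merged into one kernel-verified Lean document; each statement's English description precedes it below -/
import Mathlib

section
/- Let σ_0 > 0, p ∈ (0,∞), and let f be a measurable function on ℝ with A_{σ_0}(f)_p < ∞. Then σ ↦ A_σ(f)_p is nonincreasing on [σ_0, ∞) and is left-continuous on (σ_0, ∞), i.e., lim_{τ→σ⁻} A_τ(f)_p = A_σ(f)_p for all σ > σ_0. -/
open MeasureTheory Set Filter
open scoped ENNReal
open scoped NNReal

/-- `g` is an entire function of exponential type `σ`. -/
def ExpType (σ : ℝ) (g : ℂ → ℂ) : Prop :=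
  Differentiable ℂ g ∧
    ∀ ε > (0 : ℝ), ∃ C > (0 : ℝ), ∀ z : ℂ, ‖g z‖ ≤ C * Real.exp ((σ + ε) * ‖z‖)

/-- Error of best `L_p(ℝ)`-approximation of `f` by entire functions of exponential type `σ`. -/
noncomputable def Aerr (σ : ℝ) (f : ℝ → ℂ) (p : ℝ≥0∞) : ℝ≥0∞ :=
  ⨅ g ∈ {g : ℂ → ℂ | ExpType σ g}, eLpNorm (fun x : ℝ => f x - g x) p volume

lemma expType_mono {σ₁ σ₂ : ℝ} (h : σ₁ ≤ σ₂) {g : ℂ → ℂ} (hg : ExpType σ₁ g) :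
    ExpType σ₂ g := by
  refine ⟨hg.1, fun ε hε => ?_⟩
  obtain ⟨C, hC, hb⟩ := hg.2 ε hε
  refine ⟨C, hC, fun z => (hb z).trans ?_⟩
  refine mul_le_mul_of_nonneg_left (Real.exp_le_exp.2 ?_) hC.le
  exact mul_le_mul_of_nonneg_right (by linarith) (norm_nonneg z)

lemma Aerr_anti {σ₁ σ₂ : ℝ} (h : σ₁ ≤ σ₂) (f : ℝ → ℂ) (p : ℝ≥0∞) :
    Aerr σ₂ f p ≤ Aerr σ₁ f p :=
  le_iInf₂ fun g hg => iInf₂_le g (expType_mono h hg)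

lemma expType_sub {σ : ℝ} {g₁ g₂ : ℂ → ℂ} (h₁ : ExpType σ g₁) (h₂ : ExpType σ g₂) :
    ExpType σ (fun z => g₁ z - g₂ z) := by
  refine ⟨h₁.1.sub h₂.1, fun ε hε => ?_⟩
  obtain ⟨C₁, hC₁, hb₁⟩ := h₁.2 ε hε
  obtain ⟨C₂, hC₂, hb₂⟩ := h₂.2 ε hε
  refine ⟨C₁ + C₂, by linarith, fun z => ?_⟩
  calc ‖g₁ z - g₂ z‖ ≤ ‖g₁ z‖ + ‖g₂ z‖ := norm_sub_le _ _
    _ ≤ C₁ * Real.exp ((σ + ε) * ‖z‖) + C₂ * Real.exp ((σ + ε) * ‖z‖) :=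
        add_le_add (hb₁ z) (hb₂ z)
    _ = (C₁ + C₂) * Real.exp ((σ + ε) * ‖z‖) := (add_mul _ _ _).symm

lemma expType_add {σ : ℝ} {g₁ g₂ : ℂ → ℂ} (h₁ : ExpType σ g₁) (h₂ : ExpType σ g₂) :
    ExpType σ (fun z => g₁ z + g₂ z) := by
  refine ⟨h₁.1.add h₂.1, fun ε hε => ?_⟩
  obtain ⟨C₁, hC₁, hb₁⟩ := h₁.2 ε hε
  obtain ⟨C₂, hC₂, hb₂⟩ := h₂.2 ε hε
  refine ⟨C₁ + C₂, by linarith, fun z => ?_⟩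
  calc ‖g₁ z + g₂ z‖ ≤ ‖g₁ z‖ + ‖g₂ z‖ := norm_add_le _ _
    _ ≤ C₁ * Real.exp ((σ + ε) * ‖z‖) + C₂ * Real.exp ((σ + ε) * ‖z‖) :=
        add_le_add (hb₁ z) (hb₂ z)
    _ = (C₁ + C₂) * Real.exp ((σ + ε) * ‖z‖) := (add_mul _ _ _).symm

lemma expType_dilate {σ : ℝ} {g : ℂ → ℂ} (hg : ExpType σ g) {l : ℝ} (hl : 0 < l)
    (hl1 : l ≤ 1) : ExpType (l * σ) (fun z => g ((l : ℂ) * z)) := by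
  refine ⟨hg.1.comp (differentiable_id.const_mul _), fun ε hε => ?_⟩
  obtain ⟨C, hC, hb⟩ := hg.2 ε hε
  refine ⟨C, hC, fun z => ?_⟩
  have hn : ‖(l : ℂ) * z‖ = l * ‖z‖ := by
    rw [norm_mul, Complex.norm_real, Real.norm_eq_abs, abs_of_pos hl]
  refine (hb ((l : ℂ) * z)).trans (mul_le_mul_of_nonneg_left (Real.exp_le_exp.2 ?_) hC.le)
  rw [hn]
  have hz := norm_nonneg z
  nlinarith [mul_nonneg (mul_nonneg (sub_nonneg.2 hl1) hε.le) hz]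

lemma exists_expType_lt {σ : ℝ} {f : ℝ → ℂ} {p : ℝ≥0∞} {a : ℝ≥0∞} (h : Aerr σ f p < a) :
    ∃ g : ℂ → ℂ, ExpType σ g ∧ eLpNorm (fun x : ℝ => f x - g x) p volume < a := by
  simp only [Aerr, iInf_lt_iff, mem_setOf_eq] at h
  obtain ⟨g, hg, hlt⟩ := h
  exact ⟨g, hg, hlt⟩

lemma eLpNorm_comp_mul_left {p : ℝ≥0∞} (hp : p ≠ 0) (hp' : p ≠ ⊤) (w : ℝ → ℂ)
    (hw : Measurable w) {l : ℝ} (hl : 0 < l) :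
    eLpNorm (fun x => w (l * x)) p volume
      = ENNReal.ofReal l⁻¹ ^ (1 / p.toReal) * eLpNorm w p volume := by
  rw [eLpNorm_eq_lintegral_rpow_enorm_toReal hp hp', eLpNorm_eq_lintegral_rpow_enorm_toReal hp hp']
  simp only [enorm_eq_nnnorm]
  have hm : Measurable fun y : ℝ => (‖w y‖₊ : ℝ≥0∞) ^ p.toReal :=
    hw.enorm.pow_const p.toReal
  have h1 : ∫⁻ x, (‖w (l * x)‖₊ : ℝ≥0∞) ^ p.toReal ∂volume
      = ∫⁻ y, (‖w y‖₊ : ℝ≥0∞) ^ p.toReal ∂(Measure.map (fun x => l * x) volume) :=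
    (lintegral_map hm (measurable_const_mul l)).symm
  rw [h1, Real.map_volume_mul_left hl.ne', lintegral_smul_measure, smul_eq_mul,
    ENNReal.mul_rpow_of_nonneg _ _ (by positivity), abs_of_pos (inv_pos.2 hl)]

lemma eLpNorm_le_of_bound_support {p : ℝ≥0∞} (hp : p ≠ 0) (hp' : p ≠ ⊤) (v : ℝ → ℂ)
    {r : ℝ≥0} {s : Set ℝ} (hs : MeasurableSet s)
    (hbd : ∀ x, (‖v x‖₊ : ℝ≥0∞) ^ p.toReal ≤ s.indicator (fun _ => (r : ℝ≥0∞) ^ p.toReal) x) :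
    eLpNorm v p volume ≤ ((r : ℝ≥0∞) ^ p.toReal * volume s) ^ (1 / p.toReal) := by
  rw [eLpNorm_eq_lintegral_rpow_enorm_toReal hp hp']
  simp only [enorm_eq_nnnorm]
  refine ENNReal.rpow_le_rpow ?_ (by positivity)
  calc ∫⁻ x, (‖v x‖₊ : ℝ≥0∞) ^ p.toReal ∂volume
      ≤ ∫⁻ x, s.indicator (fun _ => (r : ℝ≥0∞) ^ p.toReal) x ∂volume := lintegral_mono hbd
    _ = (r : ℝ≥0∞) ^ p.toReal * volume s := by
        rw [lintegral_indicator hs, setLIntegral_const]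

lemma eLpNorm_add_le_rpow {p : ℝ≥0∞} (hp : p ≠ 0) (hp' : p ≠ ⊤) (hq1 : p.toReal ≤ 1)
    {X Y : ℝ → ℂ} (hX : AEStronglyMeasurable X volume) :
    eLpNorm (fun x => X x + Y x) p volume
      ≤ (eLpNorm X p volume ^ p.toReal + eLpNorm Y p volume ^ p.toReal) ^ (1 / p.toReal) := by
  have hq : 0 < p.toReal := ENNReal.toReal_pos hp hp'
  have eX : eLpNorm X p volume ^ p.toReal = ∫⁻ x, (‖X x‖₊ : ℝ≥0∞) ^ p.toReal ∂volume := by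
    rw [eLpNorm_eq_lintegral_rpow_enorm_toReal hp hp']
    simp only [enorm_eq_nnnorm]
    rw [← ENNReal.rpow_mul, one_div,
      inv_mul_cancel₀ hq.ne', ENNReal.rpow_one]
  have eY : eLpNorm Y p volume ^ p.toReal = ∫⁻ x, (‖Y x‖₊ : ℝ≥0∞) ^ p.toReal ∂volume := by
    rw [eLpNorm_eq_lintegral_rpow_enorm_toReal hp hp']
    simp only [enorm_eq_nnnorm]
    rw [← ENNReal.rpow_mul, one_div,
      inv_mul_cancel₀ hq.ne', ENNReal.rpow_one]
  have key : (∫⁻ x, (‖X x + Y x‖₊ : ℝ≥0∞) ^ p.toReal ∂volume)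
      ≤ (∫⁻ x, (‖X x‖₊ : ℝ≥0∞) ^ p.toReal ∂volume)
        + ∫⁻ x, (‖Y x‖₊ : ℝ≥0∞) ^ p.toReal ∂volume := by
    have hpt : ∀ x, (‖X x + Y x‖₊ : ℝ≥0∞) ^ p.toReal
        ≤ (‖X x‖₊ : ℝ≥0∞) ^ p.toReal + (‖Y x‖₊ : ℝ≥0∞) ^ p.toReal := by
      intro x
      refine le_trans ?_ (ENNReal.rpow_add_le_add_rpow _ _ hq.le hq1)
      refine ENNReal.rpow_le_rpow ?_ hq.le
      exact_mod_cast nnnorm_add_le (X x) (Y x)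
    calc ∫⁻ x, (‖X x + Y x‖₊ : ℝ≥0∞) ^ p.toReal ∂volume
        ≤ ∫⁻ x, ((‖X x‖₊ : ℝ≥0∞) ^ p.toReal + (‖Y x‖₊ : ℝ≥0∞) ^ p.toReal) ∂volume :=
          lintegral_mono hpt
      _ = _ := lintegral_add_left' (hX.enorm.pow_const p.toReal) _
  rw [eLpNorm_eq_lintegral_rpow_enorm_toReal hp hp']
  simp only [enorm_eq_nnnorm]
  rw [eX, eY]
  exact ENNReal.rpow_le_rpow key (by positivity)

lemma combine {p : ℝ≥0∞} (hp : p ≠ 0) (hp' : p ≠ ⊤) {A ε : ℝ≥0∞} (hA : A ≠ ⊤)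
    (hε0 : ε ≠ 0) (hεt : ε ≠ ⊤) :
    ∃ δ : ℝ≥0∞, 0 < δ ∧ ∀ X Y : ℝ → ℂ, AEStronglyMeasurable X volume →
      AEStronglyMeasurable Y volume → eLpNorm X p volume ≤ A + ε / 2 →
      eLpNorm Y p volume ≤ δ → eLpNorm (fun x => X x + Y x) p volume ≤ A + ε := by
  have hq : 0 < p.toReal := ENNReal.toReal_pos hp hp'
  rcases le_or_gt 1 p with h1p | hp1
  · refine ⟨ε / 2, ENNReal.div_pos hε0 (by norm_num), fun X Y hX hY hXe hYe => ?_⟩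
    calc eLpNorm (fun x => X x + Y x) p volume
        ≤ eLpNorm X p volume + eLpNorm Y p volume := eLpNorm_add_le hX hY h1p
      _ ≤ (A + ε / 2) + ε / 2 := add_le_add hXe hYe
      _ = A + ε := by rw [add_assoc, ENNReal.add_halves]
  · have hq1 : p.toReal ≤ 1 := by
      calc p.toReal ≤ (1 : ℝ≥0∞).toReal := ENNReal.toReal_mono (by norm_num) hp1.le
        _ = 1 := by simp
    have hlt : A + ε / 2 < A + ε :=
      ENNReal.add_lt_add_left hA (ENNReal.half_lt_self hε0 hεt)
    have hpow : (A + ε / 2) ^ p.toReal < (A + ε) ^ p.toReal := ENNReal.rpow_lt_rpow hlt hq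
    have hsubt : (A + ε) ^ p.toReal - (A + ε / 2) ^ p.toReal ≠ ⊤ := by
      refine ne_top_of_le_ne_top ?_ tsub_le_self
      exact ENNReal.rpow_ne_top_of_nonneg hq.le (by simp [ENNReal.add_eq_top, hA, hεt])
    set δ : ℝ≥0∞ := ((A + ε) ^ p.toReal - (A + ε / 2) ^ p.toReal) ^ (1 / p.toReal) with hδdef
    have hδ : 0 < δ := ENNReal.rpow_pos (tsub_pos_iff_lt.2 hpow) hsubt
    refine ⟨δ, hδ, fun X Y hX hY hXe hYe => ?_⟩
    have hδq : δ ^ p.toReal = (A + ε) ^ p.toReal - (A + ε / 2) ^ p.toReal := by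
      rw [hδdef, ← ENNReal.rpow_mul, one_div, inv_mul_cancel₀ hq.ne', ENNReal.rpow_one]
    calc eLpNorm (fun x => X x + Y x) p volume
        ≤ (eLpNorm X p volume ^ p.toReal + eLpNorm Y p volume ^ p.toReal) ^ (1 / p.toReal) :=
          eLpNorm_add_le_rpow hp hp' hq1 hX
      _ ≤ ((A + ε / 2) ^ p.toReal
            + ((A + ε) ^ p.toReal - (A + ε / 2) ^ p.toReal)) ^ (1 / p.toReal) := by
          refine ENNReal.rpow_le_rpow ?_ (by positivity)
          exact add_le_add (ENNReal.rpow_le_rpow hXe hq.le)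
            (hδq ▸ ENNReal.rpow_le_rpow hYe hq.le)
      _ = ((A + ε) ^ p.toReal) ^ (1 / p.toReal) := by
          rw [add_tsub_cancel_of_le hpow.le]
      _ = A + ε := by
          rw [← ENNReal.rpow_mul, mul_one_div, div_self hq.ne', ENNReal.rpow_one]

lemma dil {p : ℝ≥0∞} (hp : p ≠ 0) (hp' : p ≠ ⊤) (u : ℝ → ℂ) (hu_cont : Continuous u)
    (hu : MemLp u p volume) {δ : ℝ≥0∞} (hδ : 0 < δ) {c : ℝ} (hc : 1 / 2 ≤ c) (hc1 : c < 1) :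
    ∃ l : ℝ, c ≤ l ∧ l < 1 ∧ eLpNorm (fun x => u x - u (l * x)) p volume ≤ δ := by
  set q := p.toReal with hqdef
  have hq : 0 < q := ENNReal.toReal_pos hp hp'
  rcases eq_or_ne δ ⊤ with rfl | hδt
  · exact ⟨c, le_refl c, hc1, le_top⟩
  set C := ENNReal.LpAddConst p with hCdef
  have hCt : C ≠ ⊤ := (ENNReal.LpAddConst_lt_top p).ne
  have h2q : (2 : ℝ≥0∞) ^ (1 / q) ≠ ⊤ :=
    ENNReal.rpow_ne_top_of_nonneg (by positivity) (by norm_num)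
  set K : ℝ≥0∞ := C + C * C + C * C * (2 : ℝ≥0∞) ^ (1 / q) with hK
  have hKt : K + 1 ≠ ⊤ := by
    simp only [hK, ne_eq, ENNReal.add_eq_top, not_or]
    exact ⟨⟨⟨hCt, ENNReal.mul_ne_top hCt hCt⟩,
      ENNReal.mul_ne_top (ENNReal.mul_ne_top hCt hCt) h2q⟩, ENNReal.one_ne_top⟩
  set D : ℝ≥0∞ := δ / (K + 1) with hD
  have hD0 : D ≠ 0 := by
    simp only [hD, ne_eq, ENNReal.div_eq_zero_iff, not_or]
    exact ⟨hδ.ne', hKt⟩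
  have hDt : D ≠ ⊤ := by
    refine ne_top_of_le_ne_top hδt ?_
    exact ENNReal.div_le_of_le_mul (le_mul_of_one_le_right zero_le (le_add_self))
  obtain ⟨φ, φsupp, hφe, φcont, φmem⟩ := hu.exists_hasCompactSupport_eLpNorm_sub_le hp' hD0
  obtain ⟨R, hR0, hRsupp⟩ : ∃ R : ℝ, 0 < R ∧ tsupport φ ⊆ Icc (-R) R := by
    obtain ⟨r, hr⟩ := φsupp.isBounded.subset_closedBall (0 : ℝ)
    refine ⟨max r 1, by positivity, hr.trans ?_⟩
    intro x hx
    simp only [Metric.mem_closedBall, Real.dist_eq, sub_zero] at hx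
    have : |x| ≤ max r 1 := hx.trans (le_max_left _ _)
    exact ⟨neg_le_of_abs_le this, le_of_abs_le this⟩
  set V : ℝ≥0∞ := volume (Icc (-(2 * R)) (2 * R)) + 1 with hV
  have hV0 : V ≠ 0 := by simp [hV]
  have hVt : V ≠ ⊤ := by
    have : volume (Icc (-(2 * R)) (2 * R)) < ⊤ := measure_Icc_lt_top
    exact ENNReal.add_ne_top.2 ⟨this.ne, ENNReal.one_ne_top⟩
  set B : ℝ≥0∞ := (D ^ q / V) ^ (1 / q) with hB
  have hB0 : 0 < B := by
    refine ENNReal.rpow_pos (ENNReal.div_pos ?_ hVt)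
      (ENNReal.div_lt_top (ENNReal.rpow_ne_top_of_nonneg hq.le hDt) hV0).ne
    exact (ENNReal.rpow_pos (pos_iff_ne_zero.2 hD0) hDt).ne'
  obtain ⟨r, hr0, hrB⟩ := ENNReal.lt_iff_exists_nnreal_btwn.1 hB0
  have hr0' : (0 : ℝ) < r := by exact_mod_cast ENNReal.coe_lt_coe.1 (by exact_mod_cast hr0)
  have φuc : UniformContinuous φ := φsupp.uniformContinuous_of_continuous φcont
  obtain ⟨η, hη0, hηr⟩ := Metric.uniformContinuous_iff.1 φuc r hr0'
  set l : ℝ := max c (1 - η / (8 * R + 1)) with hldef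
  have hcl : c ≤ l := le_max_left _ _
  have hl1 : l < 1 := by
    refine max_lt hc1 ?_
    have : 0 < η / (8 * R + 1) := by positivity
    linarith
  have hl_half : 1 / 2 ≤ l := hc.trans hcl
  have hl0 : 0 < l := lt_of_lt_of_le (by norm_num) hl_half
  have hgap : 1 - l ≤ η / (8 * R + 1) := by
    have := le_max_right c (1 - η / (8 * R + 1))
    linarith
  refine ⟨l, hcl, hl1, ?_⟩
  -- pointwise bound for `φ - φ (l ·)`
  have hpt : ∀ x : ℝ, (‖φ x - φ (l * x)‖₊ : ℝ≥0∞) ^ q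
      ≤ (Icc (-(2 * R)) (2 * R)).indicator (fun _ => (r : ℝ≥0∞) ^ q) x := by
    intro x
    by_cases hx : |x| ≤ 2 * R
    · have hmem : x ∈ Icc (-(2 * R)) (2 * R) := by
        rcases abs_le.1 hx with ⟨h1, h2⟩; exact ⟨h1, h2⟩
      rw [indicator_of_mem hmem]
      refine ENNReal.rpow_le_rpow ?_ hq.le
      have hdd : dist x (l * x) < η := by
        rw [Real.dist_eq]
        have hxe : x - l * x = (1 - l) * x := by ring
        rw [hxe, abs_mul, abs_of_nonneg (by linarith : (0 : ℝ) ≤ 1 - l)]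
        have e1 : (1 - l) * |x| ≤ (1 - l) * (2 * R) :=
          mul_le_mul_of_nonneg_left hx (by linarith)
        have e2 : (1 - l) * (2 * R) ≤ η / (8 * R + 1) * (2 * R) :=
          mul_le_mul_of_nonneg_right hgap (by linarith)
        have e3 : η / (8 * R + 1) * (2 * R) < η := by
          rw [div_mul_eq_mul_div, div_lt_iff₀ (by linarith)]
          nlinarith
        linarith
      have hnd := hηr hdd
      rw [dist_eq_norm] at hnd
      have : ‖φ x - φ (l * x)‖₊ ≤ r := by
        rw [← NNReal.coe_le_coe, coe_nnnorm]
        exact hnd.le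
      exact_mod_cast this
    · have hxmem : x ∉ Icc (-(2 * R)) (2 * R) := by
        intro hm
        exact hx (abs_le.2 ⟨hm.1, hm.2⟩)
      rw [indicator_of_notMem hxmem]
      have h1 : φ x = 0 := by
        refine image_eq_zero_of_notMem_tsupport fun hmem => ?_
        have := hRsupp hmem
        have hax : |x| ≤ R := abs_le.2 ⟨this.1, this.2⟩
        push_neg at hx
        nlinarith
      have h2 : φ (l * x) = 0 := by
        refine image_eq_zero_of_notMem_tsupport fun hmem => ?_
        have := hRsupp hmem
        have hax : |l * x| ≤ R := abs_le.2 ⟨this.1, this.2⟩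
        rw [abs_mul, abs_of_pos hl0] at hax
        push_neg at hx
        nlinarith
      simp [h1, h2, ENNReal.zero_rpow_of_pos hq]
  have e2 : eLpNorm (fun x => φ x - φ (l * x)) p volume ≤ D := by
    refine (eLpNorm_le_of_bound_support hp hp' _ measurableSet_Icc hpt).trans ?_
    have hstep : (r : ℝ≥0∞) ^ q * volume (Icc (-(2 * R)) (2 * R)) ≤ D ^ q := by
      calc (r : ℝ≥0∞) ^ q * volume (Icc (-(2 * R)) (2 * R)) ≤ B ^ q * V := by
            refine mul_le_mul' (ENNReal.rpow_le_rpow hrB.le hq.le) ?_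
            rw [hV]; exact le_self_add
        _ = D ^ q := by
            rw [hB, ← ENNReal.rpow_mul, one_div, inv_mul_cancel₀ hq.ne', ENNReal.rpow_one,
              ENNReal.div_mul_cancel hV0 hVt]
    calc ((r : ℝ≥0∞) ^ q * volume (Icc (-(2 * R)) (2 * R))) ^ (1 / q)
        ≤ (D ^ q) ^ (1 / q) := ENNReal.rpow_le_rpow hstep (by positivity)
      _ = D := by rw [← ENNReal.rpow_mul, mul_one_div, div_self hq.ne', ENNReal.rpow_one]
  have e1 : eLpNorm (fun x => u x - φ x) p volume ≤ D := by
    have : (fun x => u x - φ x) = u - φ := rfl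
    rw [this]; exact hφe
  have wmeas : Measurable fun y => φ y - u y := (φcont.sub hu_cont).measurable
  have e3 : eLpNorm (fun x => φ (l * x) - u (l * x)) p volume
      ≤ (2 : ℝ≥0∞) ^ (1 / q) * D := by
    have hsc := eLpNorm_comp_mul_left hp hp' (fun y => φ y - u y) wmeas hl0
    calc eLpNorm (fun x => φ (l * x) - u (l * x)) p volume
        = ENNReal.ofReal l⁻¹ ^ (1 / q) * eLpNorm (fun y => φ y - u y) p volume := hsc
      _ ≤ (2 : ℝ≥0∞) ^ (1 / q) * D := by
          refine mul_le_mul' (ENNReal.rpow_le_rpow ?_ (by positivity)) ?_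
          · refine le_trans (ENNReal.ofReal_le_ofReal ?_) (by simp : ENNReal.ofReal 2 ≤ 2)
            rw [inv_le_comm₀ hl0 (by norm_num)]
            linarith
          · have hcomm : eLpNorm (fun y => φ y - u y) p volume
                = eLpNorm (fun y => u y - φ y) p volume := by
              have h1 : (fun y => φ y - u y) = φ - u := rfl
              have h2 : (fun y => u y - φ y) = u - φ := rfl
              rw [h1, h2, eLpNorm_sub_comm]
            rw [hcomm]; exact e1
  have m1 : AEStronglyMeasurable (fun x => u x - φ x) volume :=
    (hu_cont.sub φcont).aestronglyMeasurable
  have m2 : AEStronglyMeasurable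
      (fun x => (φ x - φ (l * x)) + (φ (l * x) - u (l * x))) volume := by
    apply Continuous.aestronglyMeasurable
    have hlcont : Continuous fun x : ℝ => l * x := continuous_const.mul continuous_id
    exact ((φcont.sub (φcont.comp hlcont)).add ((φcont.comp hlcont).sub
      (hu_cont.comp hlcont)))
  have m2a : AEStronglyMeasurable (fun x => φ x - φ (l * x)) volume := by
    apply Continuous.aestronglyMeasurable
    exact φcont.sub (φcont.comp (continuous_const.mul continuous_id))
  have m2b : AEStronglyMeasurable (fun x => φ (l * x) - u (l * x)) volume := by
    apply Continuous.aestronglyMeasurable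
    exact (φcont.comp (continuous_const.mul continuous_id)).sub
      (hu_cont.comp (continuous_const.mul continuous_id))
  have hsplit : (fun x => u x - u (l * x))
      = (fun x => (u x - φ x) + ((φ x - φ (l * x)) + (φ (l * x) - u (l * x)))) := by
    funext x; ring
  have hinner : eLpNorm (fun x => (φ x - φ (l * x)) + (φ (l * x) - u (l * x))) p volume
      ≤ C * (D + (2 : ℝ≥0∞) ^ (1 / q) * D) := by
    refine le_trans (eLpNorm_add_le' m2a m2b p) ?_
    exact mul_le_mul_right (add_le_add e2 e3) C
  calc eLpNorm (fun x => u x - u (l * x)) p volume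
      ≤ C * (eLpNorm (fun x => u x - φ x) p volume
          + eLpNorm (fun x => (φ x - φ (l * x)) + (φ (l * x) - u (l * x))) p volume) := by
        rw [hsplit]; exact eLpNorm_add_le' m1 m2 p
    _ ≤ C * (D + C * (D + (2 : ℝ≥0∞) ^ (1 / q) * D)) := by
        refine mul_le_mul_right (add_le_add e1 hinner) C
    _ = K * D := by rw [hK]; ring
    _ ≤ (K + 1) * D := mul_le_mul_left le_self_add D
    _ = δ := by rw [hD, mul_comm, ENNReal.div_mul_cancel (by simp) hKt]

lemma Aerr_key (σ₀ : ℝ) (hσ₀ : 0 < σ₀) {p : ℝ≥0∞} (hp : p ≠ 0) (hp' : p ≠ ⊤) (f : ℝ → ℂ)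
    (hf : AEStronglyMeasurable f volume) (hfin : Aerr σ₀ f p ≠ ⊤) {σ : ℝ} (hσ : σ₀ < σ)
    {ε : ℝ≥0∞} (hε0 : ε ≠ 0) (hεt : ε ≠ ⊤) :
    ∃ τ : ℝ, τ < σ ∧ Aerr τ f p ≤ Aerr σ f p + ε := by
  have hσpos : 0 < σ := hσ₀.trans hσ
  have hAle : Aerr σ f p ≤ Aerr σ₀ f p := Aerr_anti hσ.le f p
  have hA : Aerr σ f p ≠ ⊤ := fun h => hfin (top_le_iff.1 (h ▸ hAle))
  obtain ⟨g₀, hg₀, hg₀e⟩ := exists_expType_lt (σ := σ₀) (f := f) (p := p) (a := ⊤)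
    (lt_top_iff_ne_top.2 hfin)
  obtain ⟨δ, hδ0, hcomb⟩ := combine hp hp' hA hε0 hεt
  have hlt : Aerr σ f p < Aerr σ f p + ε / 2 := by
    refine ENNReal.lt_add_right hA ?_
    simp only [ne_eq, ENNReal.div_eq_zero_iff, not_or]
    exact ⟨hε0, by norm_num⟩
  obtain ⟨g, hg, hge⟩ := exists_expType_lt hlt
  have hgcont : Continuous fun x : ℝ => g x := hg.1.continuous.comp Complex.continuous_ofReal
  have hg₀cont : Continuous fun x : ℝ => g₀ x := hg₀.1.continuous.comp Complex.continuous_ofReal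
  set u : ℝ → ℂ := fun x => g x - g₀ x with hu
  have hucont : Continuous u := hgcont.sub hg₀cont
  have humem : MemLp u p volume := by
    refine ⟨hucont.aestronglyMeasurable, ?_⟩
    have hrw : u = (fun x : ℝ => f x - g₀ x) - (fun x : ℝ => f x - g x) := by
      funext x; simp only [hu, Pi.sub_apply]; ring
    rw [hrw]
    calc eLpNorm _ p volume
        ≤ ENNReal.LpAddConst p * (eLpNorm (fun x : ℝ => f x - g₀ x) p volume
          + eLpNorm (fun x : ℝ => f x - g x) p volume) :=
          eLpNorm_sub_le' (hf.sub hg₀cont.aestronglyMeasurable)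
            (hf.sub hgcont.aestronglyMeasurable) p
      _ < ⊤ := by
          refine ENNReal.mul_lt_top (ENNReal.LpAddConst_lt_top p) (ENNReal.add_lt_top.2 ⟨hg₀e, ?_⟩)
          exact hge.trans (ENNReal.add_lt_top.2
            ⟨hA.lt_top, ENNReal.div_lt_top hεt (by norm_num)⟩)
  set c : ℝ := max (1 / 2) (σ₀ / σ) with hcdef
  have hc1 : c < 1 := max_lt (by norm_num) ((div_lt_one hσpos).2 hσ)
  set c' : ℝ := (c + 1) / 2 with hc'def
  have hchalf : (1 : ℝ) / 2 ≤ c := le_max_left _ _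
  have hcc' : c < c' := by rw [hc'def]; linarith
  have hc'half : 1 / 2 ≤ c' := by rw [hc'def]; linarith
  have hc'1 : c' < 1 := by rw [hc'def]; linarith
  obtain ⟨l, hcl, hl1, hdil⟩ := dil hp hp' u hucont humem hδ0 hc'half hc'1
  have hl0 : 0 < l := lt_of_lt_of_le (by norm_num) (hc'half.trans hcl)
  have hlgt : σ₀ / σ < l := lt_of_le_of_lt (le_max_right _ _) (hcc'.trans_le hcl)
  have hτσ₀ : σ₀ < l * σ := (div_lt_iff₀ hσpos).1 hlgt
  have hτσ : l * σ < σ := by nlinarith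
  set G : ℂ → ℂ := fun z => g₀ z + (fun w => g w - g₀ w) ((l : ℂ) * z) with hG
  have hGtype : ExpType (l * σ) G := by
    refine expType_add (expType_mono hτσ₀.le hg₀) ?_
    exact expType_dilate (expType_sub hg (expType_mono hσ.le hg₀)) hl0 hl1.le
  have hle : Aerr (l * σ) f p ≤ eLpNorm (fun x : ℝ => f x - G x) p volume :=
    iInf₂_le G hGtype
  refine ⟨l * σ, hτσ, hle.trans ?_⟩
  have hsplit : (fun x : ℝ => f x - G x)
      = fun x : ℝ => (f x - g x) + (u x - u (l * x)) := by
    funext x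
    simp only [hG, hu, Complex.ofReal_mul]
    ring
  rw [hsplit]
  refine hcomb _ _ (hf.sub hgcont.aestronglyMeasurable) ?_ hge.le hdil
  exact (hucont.sub (hucont.comp (continuous_const.mul continuous_id))).aestronglyMeasurable

theorem Aerr_antitone_and_left_continuous (σ₀ : ℝ) (hσ₀ : 0 < σ₀)
    (p : ℝ≥0∞) (hp : 0 < p) (hp' : p ≠ ⊤) (f : ℝ → ℂ)
    (hf : AEStronglyMeasurable f volume) (hfin : Aerr σ₀ f p ≠ ⊤) :
    (∀ σ₁ σ₂ : ℝ, σ₀ ≤ σ₁ → σ₁ ≤ σ₂ → Aerr σ₂ f p ≤ Aerr σ₁ f p) ∧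
      ∀ σ : ℝ, σ₀ < σ →
        Tendsto (fun τ => Aerr τ f p) (nhdsWithin σ (Iio σ)) (nhds (Aerr σ f p)) := by
  have hp0 : p ≠ 0 := hp.ne'
  have anti : Antitone fun τ : ℝ => Aerr τ f p := fun a b hab => Aerr_anti hab f p
  refine ⟨fun σ₁ σ₂ _ h => anti h, fun σ hσ => ?_⟩
  have h1 := anti.tendsto_nhdsLT σ
  have h2 : sInf ((fun τ => Aerr τ f p) '' Iio σ) = Aerr σ f p := by
    apply le_antisymm
    · apply ENNReal.le_of_forall_pos_le_add
      intro ε hε _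
      obtain ⟨τ, hτσ, hτ⟩ := Aerr_key σ₀ hσ₀ hp0 hp' f hf hfin hσ
        (ε := (ε : ℝ≥0∞)) (by exact_mod_cast hε.ne') ENNReal.coe_ne_top
      have hmem : Aerr τ f p ∈ (fun τ => Aerr τ f p) '' Iio σ :=
        mem_image_of_mem _ hτσ
      exact (sInf_le hmem).trans hτ
    · exact le_sInf (by rintro b ⟨τ, hτ, rfl⟩; exact anti (le_of_lt hτ))
  rwa [h2] at h1
end

section
/- For any polynomial P(x) = Σ_{k=0}^n c_k x^k with complex coefficients and n ∈ ℕ, and every k = 0,1,…,n, the coefficient bound |c_k| ≤ n^k / k! · ‖P‖_{L_∞([−1,1])} holds. -/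
set_option maxRecDepth 8000
set_option maxHeartbeats 1000000


open Set Polynomial

namespace MarkovAux

/-! ### Arithmetic key inequality -/

lemma two_mul_le_two_pow {j : ℕ} (hj : 1 ≤ j) : 2 * j ≤ 2 ^ j := by
  induction j with
  | zero => omega
  | succ m ih =>
    rcases Nat.eq_or_lt_of_le hj with h | h
    · simp [← h]
    · have hm : 1 ≤ m := by omega
      have := ih hm
      have h2 : 2 ≤ 2 ^ m := by
        calc 2 ≤ 2 * m := by omega
        _ ≤ 2 ^ m := this
      calc 2 * (m + 1) = 2 * m + 2 := by ring
      _ ≤ 2 ^ m + 2 ^ m := by omega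
      _ = 2 ^ (m + 1) := by ring

lemma choose_identity (k i : ℕ) (hik : i < k) :
    k * Nat.choose (k - 1) i = (k - i) * Nat.choose k i := by
  obtain ⟨k', rfl⟩ : ∃ k', k = k' + 1 := ⟨k - 1, by omega⟩
  have h1 := Nat.add_one_mul_choose_eq k' i
  -- (k'+1) * choose k' i = choose (k'+1) (i+1) * (i+1)
  have h2 := Nat.choose_succ_right_eq (k' + 1) i
  -- choose (k'+1) (i+1) * (i+1) = choose (k'+1) i * (k'+1-i)
  simp only [Nat.add_sub_cancel]
  rw [h1, h2, Nat.mul_comm]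

lemma nat_key (m k : ℕ) (hk : 1 ≤ k) :
    m ^ k + 2 * k * (m + 1) ^ (k - 1) ≤ (m + 2) ^ k := by
  have h1 : (m + 2) ^ k = ∑ i ∈ Finset.range (k + 1), m ^ i * 2 ^ (k - i) * k.choose i :=
    add_pow m 2 k
  have h2 : (m + 1) ^ (k - 1)
      = ∑ i ∈ Finset.range k, m ^ i * 1 ^ (k - 1 - i) * (k-1).choose i := by
    have hk1 : k - 1 + 1 = k := by omega
    have hs := add_pow m 1 (k - 1)
    rw [hk1] at hs
    exact hs
  rw [h1, Finset.sum_range_succ]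
  have hterm : m ^ k * 2 ^ (k - k) * k.choose k = m ^ k := by simp
  rw [hterm]
  have hmain : 2 * k * (m + 1) ^ (k - 1)
      ≤ ∑ i ∈ Finset.range k, m ^ i * 2 ^ (k - i) * k.choose i := by
    rw [h2, Finset.mul_sum]
    apply Finset.sum_le_sum
    intro i hi
    have hik : i < k := Finset.mem_range.mp hi
    have hc := choose_identity k i hik
    have hpow : 2 * (k - i) ≤ 2 ^ (k - i) := two_mul_le_two_pow (by omega)
    calc 2 * k * (m ^ i * 1 ^ (k - 1 - i) * (k-1).choose i)
        = m ^ i * (2 * (k * (k-1).choose i)) := by rw [one_pow]; ring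
      _ = m ^ i * (2 * ((k - i) * k.choose i)) := by rw [hc]
      _ = m ^ i * ((2 * (k - i)) * k.choose i) := by ring
      _ ≤ m ^ i * (2 ^ (k - i) * k.choose i) :=
          Nat.mul_le_mul_left _ (Nat.mul_le_mul_right _ hpow)
      _ = m ^ i * 2 ^ (k - i) * k.choose i := by ring
  rw [add_comm (m ^ k)]
  exact Nat.add_le_add_right hmain _

/-! ### comp (-X) basics -/

lemma coeff_comp_neg_X (p : ℝ[X]) (i : ℕ) :
    (p.comp (-X)).coeff i = (-1) ^ i * p.coeff i := by
  induction p using Polynomial.induction_on' with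
  | add p q hp hq => simp [add_comp, hp, hq, mul_add]
  | monomial n a =>
    have h1 : (monomial n a : ℝ[X]).comp (-X) = C ((-1:ℝ)^n * a) * X ^ n := by
      rw [← C_mul_X_pow_eq_monomial, mul_comp, C_comp, X_pow_comp, neg_pow,
        (show ((-1:ℝ[X])) = C (-1) by simp), ← map_pow, ← mul_assoc, ← map_mul, mul_comm a]
    rw [h1, coeff_C_mul, coeff_X_pow, coeff_monomial]
    rcases eq_or_ne i n with rfl | hin
    · simp
    · simp [hin, Ne.symm hin]

lemma comp_neg_X_comp_neg_X (p : ℝ[X]) : (p.comp (-X)).comp (-X) = p := by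
  rw [Polynomial.comp_assoc]
  simp [neg_comp, X_comp]

lemma natDegree_comp_neg_X (p : ℝ[X]) : (p.comp (-X)).natDegree = p.natDegree := by
  rw [natDegree_comp]
  simp

/-! ### Chebyshev facts -/

lemma cheb_deg (m : ℕ) : (Chebyshev.T ℝ m).natDegree ≤ m := by
  induction m using Nat.twoStepInduction with
  | zero => simp [Chebyshev.T_zero]
  | one => simp [Chebyshev.T_one, natDegree_X_le]
  | more m ih1 ih2 =>
    have h : ((m : ℤ) + 2) = ((m + 2 : ℕ) : ℤ) := by push_cast; ring
    have hrec := Chebyshev.T_add_two ℝ (m : ℤ)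
    rw [h] at hrec
    rw [hrec]
    apply le_trans (natDegree_sub_le _ _)
    apply max_le
    · apply le_trans (natDegree_mul_le)
      have h2 : ((2 * X : ℝ[X])).natDegree ≤ 1 := by
        apply le_trans (natDegree_mul_le)
        simp [natDegree_X_le]
      have h3 : ((m:ℤ) + 1) = ((m + 1 : ℕ) : ℤ) := by push_cast; ring
      rw [h3]
      omega
    · omega

lemma cheb_parity (m : ℕ) :
    (Chebyshev.T ℝ m).comp (-X) = C ((-1:ℝ) ^ m) * Chebyshev.T ℝ m := by
  induction m using Nat.twoStepInduction with
  | zero => simp [Chebyshev.T_zero]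
  | one => simp [Chebyshev.T_one]
  | more m ih1 ih2 =>
    have h : ((m : ℤ) + 2) = ((m + 2 : ℕ) : ℤ) := by push_cast; ring
    have hrec := Chebyshev.T_add_two ℝ (m : ℤ)
    rw [h] at hrec
    have h3 : ((m:ℤ) + 1) = ((m + 1 : ℕ) : ℤ) := by push_cast; ring
    rw [h3] at hrec
    rw [hrec, sub_comp, mul_comp, mul_comp, ih1, ih2]
    have hC : (C ((-1:ℝ) ^ (m+2))) = C ((-1:ℝ)^m) := by
      rw [pow_add]; norm_num
    rw [hC]
    have hC1 : (C ((-1:ℝ) ^ (m+1))) = C ((-1:ℝ)^m) * C (-1 : ℝ) := by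
      rw [pow_add]; rw [map_mul]; norm_num
    rw [hC1]
    have h2c : ((2 : ℝ[X])).comp (-X) = 2 := by simp
    have hxc : (X : ℝ[X]).comp (-X) = -X := by simp
    rw [h2c, hxc, (show (C (-1 : ℝ) : ℝ[X]) = -1 by simp)]
    ring

lemma cheb_coeff_bound (m : ℕ) :
    ∀ k : ℕ, |(Chebyshev.T ℝ m).coeff k| ≤ (m : ℝ) ^ k / (k.factorial : ℝ) := by
  induction m using Nat.twoStepInduction with
  | zero =>
    intro k
    rw [(show ((0:ℕ):ℤ) = 0 by norm_num), Chebyshev.T_zero]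
    rcases Nat.eq_zero_or_pos k with rfl | hk
    · simp
    · rw [coeff_one, if_neg (by omega)]
      simp only [abs_zero]
      positivity
  | one =>
    intro k
    rw [(show ((1:ℕ):ℤ) = 1 by norm_num), Chebyshev.T_one]
    rcases eq_or_ne k 1 with rfl | hk
    · simp
    · rw [coeff_X, if_neg (fun h => hk h.symm)]
      simp only [abs_zero]
      positivity
  | more m ih1 ih2 =>
    intro k
    have h : ((m : ℤ) + 2) = ((m + 2 : ℕ) : ℤ) := by push_cast; ring
    have hrec := Chebyshev.T_add_two ℝ (m : ℤ)
    rw [h] at hrec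
    have h3 : ((m:ℤ) + 1) = ((m + 1 : ℕ) : ℤ) := by push_cast; ring
    rw [h3] at hrec
    rw [hrec]
    rcases Nat.eq_zero_or_pos k with rfl | hk
    · -- coeff 0 : (2*X*T(m+1)).coeff 0 = 0
      rw [coeff_sub]
      have h0 : ((2 * X * Chebyshev.T ℝ (m+1 : ℕ)).coeff 0) = 0 := by
        rw [mul_assoc, two_mul, coeff_add, mul_coeff_zero, coeff_X_zero]
        ring
      rw [h0, zero_sub, abs_neg]
      calc |(Chebyshev.T ℝ m).coeff 0| ≤ (m:ℝ)^0 / (Nat.factorial 0 : ℝ) := ih1 0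
      _ ≤ ((m:ℝ)+2)^0 / (Nat.factorial 0 : ℝ) := by norm_num
      _ = ((m+2 : ℕ) : ℝ)^0 / (Nat.factorial 0 : ℝ) := by push_cast; ring
    · obtain ⟨j, rfl⟩ : ∃ j, k = j + 1 := ⟨k - 1, by omega⟩
      rw [coeff_sub]
      have h0 : ((2 * X * Chebyshev.T ℝ (m+1 : ℕ)).coeff (j+1))
          = 2 * (Chebyshev.T ℝ (m+1 : ℕ)).coeff j := by
        rw [mul_assoc, two_mul, coeff_add, coeff_X_mul]
        ring
      rw [h0]
      have b1 := ih2 j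
      have b2 := ih1 (j + 1)
      have hfac : ((j+1).factorial : ℝ) = (j+1) * (j.factorial : ℝ) := by
        rw [Nat.factorial_succ]; push_cast; ring
      have hkey := nat_key m (j + 1) (by omega)
      simp only [Nat.add_sub_cancel] at hkey
      have hkeyR : (m:ℝ)^(j+1) + 2*((j:ℝ)+1)*((m:ℝ)+1)^j ≤ ((m:ℝ)+2)^(j+1) := by
        have h' := (Nat.cast_le (α := ℝ)).mpr hkey
        push_cast at h'
        convert h' using 2 <;> ring
      have hfacpos : (0:ℝ) < (j.factorial : ℝ) := by positivity
      have hfacpos1 : (0:ℝ) < ((j+1).factorial : ℝ) := by positivity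
      set a := (Chebyshev.T ℝ (m+1:ℕ)).coeff j with ha
      set b := (Chebyshev.T ℝ (m:ℕ)).coeff (j+1) with hb
      calc |2 * a - b|
          ≤ 2 * |a| + |b| := by
            calc |2 * a - b| = |2 * a + (-b)| := by ring_nf
            _ ≤ |2 * a| + |(-b)| := abs_add_le _ _
            _ = 2 * |a| + |b| := by rw [abs_neg, abs_mul, abs_two]
        _ ≤ 2 * (((m:ℝ)+1)^j / (j.factorial : ℝ)) + (m:ℝ)^(j+1) / ((j+1).factorial : ℝ) := by
            have hb1 : |a| ≤ ((m:ℝ)+1)^j / (j.factorial : ℝ) := by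
              have : ((m + 1 : ℕ) : ℝ) = (m:ℝ) + 1 := by push_cast; ring
              rw [← this]
              exact b1
            gcongr
        _ ≤ ((m:ℝ)+2)^(j+1) / ((j+1).factorial : ℝ) := by
            have comb : 2 * (((m:ℝ)+1)^j / (j.factorial : ℝ)) + (m:ℝ)^(j+1) / ((j+1).factorial : ℝ)
                = (2*((j:ℝ)+1)*((m:ℝ)+1)^j + (m:ℝ)^(j+1)) / ((j+1).factorial : ℝ) := by
              rw [hfac]
              field_simp
            rw [comb]
            gcongr
            linarith [hkeyR]
        _ = ((m+2 : ℕ) : ℝ)^(j+1) / ((j+1).factorial : ℝ) := by push_cast; ring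

/-! ### Rolle machinery -/

def HasNZeros (p : ℝ[X]) (m : ℕ) : Prop :=
  ∃ z : Fin m → ℝ, StrictMono z ∧ ∀ i, p.eval (z i) = 0

lemma hasNZeros_zero (p : ℝ[X]) : HasNZeros p 0 :=
  ⟨fun i => i.elim0, fun i => i.elim0, fun i => i.elim0⟩

lemma hasNZeros_derivative {p : ℝ[X]} {m : ℕ} (h : HasNZeros p (m + 1)) :
    HasNZeros p.derivative m := by
  obtain ⟨z, hz, hr⟩ := h
  have key : ∀ i : Fin m, ∃ c, z i.castSucc < c ∧ c < z i.succ ∧ p.derivative.eval c = 0 := by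
    intro i
    have hab : z i.castSucc < z i.succ := hz Fin.castSucc_lt_succ
    obtain ⟨c, hc, hderiv⟩ := exists_deriv_eq_zero hab (p.continuousOn)
      (by rw [hr, hr])
    refine ⟨c, hc.1, hc.2, ?_⟩
    rwa [Polynomial.deriv] at hderiv
  choose w hw1 hw2 hw3 using key
  refine ⟨w, ?_, hw3⟩
  intro i j hij
  have hle : z i.succ ≤ z j.castSucc := by
    apply hz.monotone
    rw [Fin.le_def]
    simp only [Fin.val_succ, Fin.coe_castSucc]
    exact Fin.lt_def.mp hij
  calc w i < z i.succ := hw2 i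
  _ ≤ z j.castSucc := hle
  _ < w j := hw1 j

lemma hasNZeros_iterate (k : ℕ) {p : ℝ[X]} {m : ℕ} (h : HasNZeros p m) :
    HasNZeros (derivative^[k] p) (m - k) := by
  induction k with
  | zero => simpa using h
  | succ d ih =>
    rw [Function.iterate_succ_apply']
    rcases Nat.eq_zero_or_pos (m - d) with h0 | hpos
    · have he : m - (d + 1) = 0 := by omega
      rw [he]
      exact hasNZeros_zero _
    · obtain ⟨e, he⟩ : ∃ e, m - d = e + 1 := ⟨m - d - 1, by omega⟩
      have he2 : m - (d + 1) = e := by omega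
      rw [he2]
      rw [he] at ih
      exact hasNZeros_derivative ih

lemma le_natDegree_of_hasNZeros {p : ℝ[X]} (hp : p ≠ 0) {m : ℕ} (h : HasNZeros p m) :
    m ≤ p.natDegree := by
  classical
  obtain ⟨z, hz, hr⟩ := h
  have hcard : (Finset.image z Finset.univ).card = m := by
    rw [Finset.card_image_of_injective _ hz.injective, Finset.card_univ, Fintype.card_fin]
  have hsub : Finset.image z Finset.univ ⊆ p.roots.toFinset := by
    intro x hx
    obtain ⟨i, _, rfl⟩ := Finset.mem_image.mp hx
    rw [Multiset.mem_toFinset, mem_roots hp]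
    exact hr i
  calc m = (Finset.image z Finset.univ).card := hcard.symm
  _ ≤ p.roots.toFinset.card := Finset.card_le_card hsub
  _ ≤ Multiset.card p.roots := Multiset.toFinset_card_le _
  _ ≤ p.natDegree := p.card_roots'

lemma natDegree_lt_of_iterate_deriv_eq_zero {p : ℝ[X]} (hp : p ≠ 0) {k : ℕ}
    (h : derivative^[k] p = 0) : p.natDegree < k := by
  have hco : ∀ N, k ≤ N → p.coeff N = 0 := by
    intro N hN
    have hc := Polynomial.coeff_iterate_derivative p (k := k) (N - k)
    rw [h, coeff_zero] at hc
    have hNk : N - k + k = N := by omega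
    rw [hNk] at hc
    have hpos : 0 < N.descFactorial k := by
      rw [Nat.descFactorial_eq_factorial_mul_choose]
      exact Nat.mul_pos (Nat.factorial_pos _) (Nat.choose_pos hN)
    have := hc.symm
    rw [smul_eq_zero] at this
    rcases this with h1 | h1
    · omega
    · exact h1
  by_contra hcon
  push_neg at hcon
  have hlead : p.coeff p.natDegree = 0 := hco _ hcon
  have hl2 : p.leadingCoeff = 0 := by rwa [Polynomial.leadingCoeff]
  exact hp (Polynomial.leadingCoeff_eq_zero.mp hl2)

/-! ### The core zero-counting lemma -/

lemma iter_deriv_comp_neg_X (k : ℕ) (p : ℝ[X]) :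
    derivative^[k] (p.comp (-X)) = C ((-1:ℝ)^k) * ((derivative^[k] p).comp (-X)) := by
  induction k with
  | zero => simp
  | succ d ih =>
    rw [Function.iterate_succ_apply', ih, derivative_C_mul, derivative_comp]
    rw [Function.iterate_succ_apply']
    have hdneg : derivative (-X : ℝ[X]) = -1 := by
      rw [derivative_neg, derivative_X]
    rw [hdneg]
    have hC : (C ((-1:ℝ)^(d+1))) = C ((-1:ℝ)^d) * C (-1 : ℝ) := by
      rw [pow_succ, map_mul]
    rw [hC, (show (C (-1:ℝ) : ℝ[X]) = -1 by simp)]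
    ring

lemma core {ν k : ℕ} (hk1 : 1 ≤ k) (hkν : k ≤ ν) (hpar : ν % 2 = k % 2)
    {Q : ℝ[X]} (hdeg : Q.natDegree ≤ ν) (hQpar : Q.comp (-X) = C ((-1:ℝ) ^ k) * Q)
    {M : ℝ} (hM : 0 < M) (hQb : ∀ x ∈ Icc (-1:ℝ) 1, |Q.eval x| ≤ M) :
    |Q.coeff k| ≤ |(Chebyshev.T ℝ ν).coeff k| * M := by
  by_contra hcon
  push_neg at hcon
  set t := (Chebyshev.T ℝ ν).coeff k with ht
  have hq0 : Q.coeff k ≠ 0 := by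
    intro h
    rw [h, abs_zero] at hcon
    have h1 : 0 ≤ |t| * M := mul_nonneg (abs_nonneg t) hM.le
    linarith
  set lam := t / Q.coeff k with hlam
  have hlamabs : |lam| * M < 1 := by
    rw [hlam, abs_div, div_mul_eq_mul_div, div_lt_one (abs_pos.mpr hq0)]
    exact hcon
  set W := Chebyshev.T ℝ (ν : ℤ) with hW
  set R := W - C lam * Q with hR
  have hν1 : 1 ≤ ν := le_trans hk1 hkν
  have hνR : (0:ℝ) < ν := by exact_mod_cast hν1
  -- basic facts about R
  have hcoeffR : R.coeff k = 0 := by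
    rw [hR, coeff_sub, coeff_C_mul, hlam, ← ht]
    field_simp
    ring
  have hRdeg : R.natDegree ≤ ν := by
    apply le_trans (natDegree_sub_le _ _)
    apply max_le (cheb_deg ν)
    exact le_trans (natDegree_C_mul_le _ _) hdeg
  have hsgnν : ((-1:ℝ))^ν = (-1:ℝ)^k := by
    rcases Nat.even_or_odd ν with he | ho
    · have hek : Even k := by
        rw [Nat.even_iff] at he ⊢
        omega
      rw [he.neg_one_pow, hek.neg_one_pow]
    · have hok : Odd k := by
        rw [Nat.odd_iff] at ho ⊢
        omega
      rw [ho.neg_one_pow, hok.neg_one_pow]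
  have hRpar : R.comp (-X) = C ((-1:ℝ)^k) * R := by
    rw [hR, sub_comp, mul_comp, C_comp, hQpar, cheb_parity, hsgnν]
    ring
  -- the alternation points
  set x : ℕ → ℝ := fun j => Real.cos (((ν - j : ℕ) : ℝ) * Real.pi / ν) with hx
  have hxmem : ∀ j, x j ∈ Icc (-1:ℝ) 1 := by
    intro j
    exact ⟨Real.neg_one_le_cos _, Real.cos_le_one _⟩
  have hangle : ∀ j, j ≤ ν → ((ν - j : ℕ) : ℝ) * Real.pi / ν ∈ Icc (0:ℝ) Real.pi := by
    intro j hj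
    constructor
    · positivity
    · rw [div_le_iff₀ hνR]
      have h1 : ((ν - j : ℕ) : ℝ) ≤ (ν : ℝ) := by
        exact_mod_cast Nat.sub_le ν j
      nlinarith [Real.pi_pos]
  have hxlt : ∀ i j, i < j → j ≤ ν → x i < x j := by
    intro i j hij hj
    apply Real.strictAntiOn_cos (hangle j hj) (hangle i (by omega))
    have h1 : ((ν - j : ℕ) : ℝ) < ((ν - i : ℕ) : ℝ) := by
      exact_mod_cast Nat.sub_lt_sub_left (lt_of_lt_of_le hij hj) hij
    exact (div_lt_div_iff_of_pos_right hνR).mpr (mul_lt_mul_of_pos_right h1 Real.pi_pos)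
  have hxle : ∀ i j, i ≤ j → j ≤ ν → x i ≤ x j := by
    intro i j hij hj
    rcases eq_or_lt_of_le hij with rfl | h
    · exact le_refl _
    · exact (hxlt i j h hj).le
  have hWx : ∀ j, j ≤ ν → W.eval (x j) = (-1:ℝ)^(ν - j) := by
    intro j hj
    rw [hW, hx]
    rw [Chebyshev.T_real_cos]
    have harg : ((ν : ℤ) : ℝ) * (((ν - j : ℕ) : ℝ) * Real.pi / ν) = ((ν - j : ℕ) : ℝ) * Real.pi := by
      push_cast
      field_simp
    rw [harg]
    have := Real.cos_nat_mul_pi_sub 0 (ν - j)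
    simpa using this
  have hRx : ∀ j, j ≤ ν → R.eval (x j) = (-1:ℝ)^(ν - j) - lam * Q.eval (x j) := by
    intro j hj
    rw [hR, eval_sub, eval_mul, eval_C, hWx j hj]
  have hsmall : ∀ j, |lam * Q.eval (x j)| < 1 := by
    intro j
    rw [abs_mul]
    calc |lam| * |Q.eval (x j)| ≤ |lam| * M :=
          mul_le_mul_of_nonneg_left (hQb _ (hxmem j)) (abs_nonneg lam)
    _ < 1 := hlamabs
  -- R has ν distinct zeros
  have hzeros : HasNZeros R ν := by
    have key : ∀ j : Fin ν, ∃ c, x j < c ∧ c < x (j + 1) ∧ R.eval c = 0 := by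
      intro j
      have hj1 : (j : ℕ) + 1 ≤ ν := j.isLt
      have hjν : (j : ℕ) ≤ ν := by omega
      have hlt : x j < x (j + 1) := hxlt j (j + 1) (by omega) hj1
      have hcont : ContinuousOn (fun y => R.eval y) (Icc (x j) (x (j+1))) := R.continuousOn
      obtain ⟨e, he⟩ : ∃ e, ν - (j : ℕ) = e + 1 := ⟨ν - j - 1, by omega⟩
      have he1 : ν - ((j : ℕ) + 1) = e := by omega
      have hvj : R.eval (x j) = (-1:ℝ)^(e+1) - lam * Q.eval (x j) := by
        rw [hRx j hjν, he]
      have hvj1 : R.eval (x (j+1)) = (-1:ℝ)^e - lam * Q.eval (x (j+1)) := by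
        rw [hRx (j+1) hj1, he1]
      have hb0 := hsmall (j : ℕ)
      have hb1 := hsmall ((j : ℕ) + 1)
      have habs0 : -1 < lam * Q.eval (x j) ∧ lam * Q.eval (x j) < 1 := abs_lt.mp hb0
      have habs1 : -1 < lam * Q.eval (x (j+1)) ∧ lam * Q.eval (x (j+1)) < 1 := abs_lt.mp hb1
      rcases Nat.even_or_odd e with he2 | he2
      · -- e even : R(x j) < 0 < R(x (j+1))
        have h1 : R.eval (x j) < 0 := by
          rw [hvj, pow_succ, he2.neg_one_pow]
          linarith [habs0.1]
        have h2 : 0 < R.eval (x (j+1)) := by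
          rw [hvj1, he2.neg_one_pow]
          linarith [habs1.2]
        have := intermediate_value_Ioo hlt.le hcont
        have hmem : (0:ℝ) ∈ Ioo (R.eval (x j)) (R.eval (x (j+1))) := ⟨h1, h2⟩
        obtain ⟨c, hc1, hc2⟩ := this hmem
        exact ⟨c, hc1.1, hc1.2, hc2⟩
      · -- e odd : R(x j) > 0 > R(x (j+1))
        have h1 : 0 < R.eval (x j) := by
          rw [hvj, pow_succ, he2.neg_one_pow]
          linarith [habs0.2]
        have h2 : R.eval (x (j+1)) < 0 := by
          rw [hvj1, he2.neg_one_pow]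
          linarith [habs1.1]
        have := intermediate_value_Ioo' hlt.le hcont
        have hmem : (0:ℝ) ∈ Ioo (R.eval (x (j+1))) (R.eval (x j)) := ⟨h2, h1⟩
        obtain ⟨c, hc1, hc2⟩ := this hmem
        exact ⟨c, hc1.1, hc1.2, hc2⟩
    choose z hz1 hz2 hz3 using key
    refine ⟨z, ?_, hz3⟩
    intro i j hij
    have hij' : (i : ℕ) + 1 ≤ (j : ℕ) := Fin.lt_def.mp hij
    calc z i < x ((i : ℕ) + 1) := hz2 i
    _ ≤ x (j : ℕ) := hxle _ _ hij' (by omega)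
    _ < z j := hz1 j
  -- contradiction machine
  set S := derivative^[k] R with hS
  have hS0 : S.coeff 0 = 0 := by
    rw [hS, Polynomial.coeff_iterate_derivative]
    simp [hcoeffR]
  rcases eq_or_ne R 0 with hR0 | hR0
  · -- R = 0 : then W = C lam * Q, contradiction at x = 1
    have hWQ : W = C lam * Q := by
      have h0 : W - C lam * Q = 0 := by rw [← hR]; exact hR0
      exact sub_eq_zero.mp h0
    have hW1 : W.eval 1 = 1 := by
      rw [hW]
      have h0 := Chebyshev.T_real_cos 0 (ν : ℤ)
      simpa using h0
    have heval := congrArg (fun p => Polynomial.eval 1 p) hWQ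
    simp only [eval_mul, eval_C] at heval
    rw [hW1] at heval
    have hb : |lam * Q.eval 1| < 1 := by
      rw [abs_mul]
      calc |lam| * |Q.eval 1| ≤ |lam| * M :=
            mul_le_mul_of_nonneg_left (hQb 1 (by constructor <;> norm_num)) (abs_nonneg lam)
      _ < 1 := hlamabs
    rw [← heval] at hb
    simp at hb
  rcases eq_or_ne S 0 with hSz | hSz
  · -- S = 0, R ≠ 0 : degree contradiction
    have h1 : R.natDegree < k := natDegree_lt_of_iterate_deriv_eq_zero hR0 (hS ▸ hSz)
    have h2 : ν ≤ R.natDegree := le_natDegree_of_hasNZeros hR0 hzeros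
    omega
  · -- S ≠ 0
    have hdegS : S.natDegree ≤ ν - k :=
      le_trans (Polynomial.natDegree_iterate_derivative R k) (Nat.sub_le_sub_right hRdeg k)
    have hSsym : S.comp (-X) = S := by
      have h1 := congrArg (fun p => derivative^[k] p) hRpar
      rw [iter_deriv_comp_neg_X, Polynomial.iterate_derivative_C_mul] at h1
      exact mul_left_cancel₀ (by
        simp only [ne_eq, C_eq_zero]
        exact pow_ne_zero _ (by norm_num)) h1
    have hS1 : S.coeff 1 = 0 := by
      have h1 := coeff_comp_neg_X S 1
      rw [hSsym] at h1
      simp at h1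
      linarith
    rcases eq_or_ne ν k with hνk | hνk
    · have hd0 : S.natDegree ≤ 0 := by omega
      have := eq_C_of_natDegree_le_zero hd0
      rw [hS0] at this
      simp at this
      exact hSz this
    · have hd2 : 2 ≤ ν - k := by omega
      have hdvd : (X : ℝ[X])^2 ∣ S := by
        rw [Polynomial.X_pow_dvd_iff]
        intro d hd
        interval_cases d
        · exact hS0
        · exact hS1
      obtain ⟨U, hU⟩ := hdvd
      have hUne : U ≠ 0 := by
        intro h
        rw [h, mul_zero] at hU
        exact hSz hU
      have hUdeg : U.natDegree ≤ ν - k - 2 := by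
        have h1 : S.natDegree = 2 + U.natDegree := by
          rw [hU, natDegree_mul (pow_ne_zero 2 Polynomial.X_ne_zero) hUne, natDegree_X_pow]
        omega
      have hSzeros : HasNZeros S (ν - k) := hS ▸ hasNZeros_iterate k hzeros
      obtain ⟨z, hz, hr⟩ := hSzeros
      classical
      set F := (Finset.image z Finset.univ).erase 0 with hF
      have hFcard : ν - k - 1 ≤ F.card := by
        have h1 : (Finset.image z Finset.univ).card = ν - k := by
          rw [Finset.card_image_of_injective _ hz.injective, Finset.card_univ, Fintype.card_fin]
        calc ν - k - 1 = (Finset.image z Finset.univ).card - 1 := by rw [h1]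
        _ ≤ F.card := Finset.pred_card_le_card_erase
      have hFsub : F ⊆ U.roots.toFinset := by
        intro y hy
        obtain ⟨hy0, hy1⟩ := Finset.mem_erase.mp hy
        obtain ⟨i, _, rfl⟩ := Finset.mem_image.mp hy1
        rw [Multiset.mem_toFinset, mem_roots hUne]
        have hSev : S.eval (z i) = 0 := hr i
        rw [hU, eval_mul, eval_pow, eval_X] at hSev
        rcases mul_eq_zero.mp hSev with h | h
        · exact absurd (pow_eq_zero_iff (n := 2) (by norm_num) |>.mp h) hy0
        · exact h
      have hfinal : F.card ≤ ν - k - 2 := by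
        calc F.card ≤ U.roots.toFinset.card := Finset.card_le_card hFsub
        _ ≤ Multiset.card U.roots := Multiset.toFinset_card_le _
        _ ≤ U.natDegree := U.card_roots'
        _ ≤ ν - k - 2 := hUdeg
      omega

/-! ### Real case -/

lemma real_case {n k : ℕ} (hn : 1 ≤ n) (hk : k ≤ n) {Q : ℝ[X]} (hdeg : Q.natDegree ≤ n)
    {M : ℝ} (hM0 : 0 ≤ M) (hQb : ∀ x ∈ Icc (-1:ℝ) 1, |Q.eval x| ≤ M) :
    |Q.coeff k| ≤ (n:ℝ) ^ k / (k.factorial : ℝ) * M := by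
  rcases Nat.eq_zero_or_pos k with rfl | hk1
  · have h0 : |Q.coeff 0| ≤ M := by
      rw [coeff_zero_eq_eval_zero]
      exact hQb 0 (by constructor <;> norm_num)
    simpa using h0
  rcases eq_or_lt_of_le hM0 with hM | hM
  · -- M = 0
    have hQ0 : Q = 0 := by
      apply Polynomial.eq_zero_of_infinite_isRoot
      apply Set.Infinite.mono ?_ (Set.Icc_infinite (by norm_num : (-1:ℝ) < 1))
      intro y hy
      have h1 := hQb y hy
      rw [← hM] at h1
      have h2 : |Q.eval y| = 0 := le_antisymm h1 (abs_nonneg _)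
      exact abs_eq_zero.mp h2
    rw [hQ0, ← hM]
    simp
  · -- M > 0
    set Qc := Q.comp (-X) with hQc
    set Q1 := C (2⁻¹ : ℝ) * (Q + C ((-1:ℝ)^k) * Qc) with hQ1
    have hsq : ((-1:ℝ)^k) * ((-1:ℝ)^k) = 1 := by
      rw [← pow_add]
      exact Even.neg_one_pow ⟨k, rfl⟩
    have hc : Q1.coeff k = Q.coeff k := by
      rw [hQ1, coeff_C_mul, coeff_add, coeff_C_mul, hQc, coeff_comp_neg_X]
      have : ((-1:ℝ)^k) * ((-1:ℝ)^k * Q.coeff k) = Q.coeff k := by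
        rw [← mul_assoc, hsq, one_mul]
      rw [this]
      ring
    have hpar1 : Q1.comp (-X) = C ((-1:ℝ)^k) * Q1 := by
      rw [hQ1, mul_comp, C_comp, add_comp, mul_comp, C_comp, hQc, comp_neg_X_comp_neg_X]
      have hCC : (C ((-1:ℝ)^k)) * (C ((-1:ℝ)^k)) = (1 : ℝ[X]) := by
        rw [← map_mul, hsq, map_one]
      have expand : C ((-1:ℝ)^k) * (C (2⁻¹:ℝ) * (Q + C ((-1:ℝ)^k) * (Q.comp (-X))))
          = C (2⁻¹:ℝ) * (C ((-1:ℝ)^k) * Q + (C ((-1:ℝ)^k) * C ((-1:ℝ)^k)) * Q.comp (-X)) := by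
        ring
      rw [expand, hCC, one_mul]
      ring
    have hdeg1 : Q1.natDegree ≤ n := by
      apply le_trans (natDegree_C_mul_le _ _)
      apply le_trans (natDegree_add_le _ _)
      apply max_le hdeg
      apply le_trans (natDegree_C_mul_le _ _)
      rw [hQc, natDegree_comp_neg_X]
      exact hdeg
    have hb1 : ∀ y ∈ Icc (-1:ℝ) 1, |Q1.eval y| ≤ M := by
      intro y hy
      have hyneg : -y ∈ Icc (-1:ℝ) 1 := by
        obtain ⟨h1, h2⟩ := hy
        constructor <;> linarith
      have heval : Q1.eval y = 2⁻¹ * (Q.eval y + (-1:ℝ)^k * Q.eval (-y)) := by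
        rw [hQ1]
        simp [hQc, eval_comp]
      rw [heval]
      have hb2 := hQb y hy
      have hb3 := hQb (-y) hyneg
      have habs : |Q.eval y + (-1:ℝ)^k * Q.eval (-y)| ≤ 2 * M := by
        calc |Q.eval y + (-1:ℝ)^k * Q.eval (-y)|
            ≤ |Q.eval y| + |(-1:ℝ)^k * Q.eval (-y)| := abs_add_le _ _
        _ = |Q.eval y| + |Q.eval (-y)| := by
            rw [abs_mul, abs_pow, abs_neg, abs_one, one_pow, one_mul]
        _ ≤ 2 * M := by linarith
      rw [abs_mul]
      rw [(show |(2⁻¹:ℝ)| = 2⁻¹ by norm_num)]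
      linarith
    -- choose the parity-matched degree
    set ν := if n % 2 = k % 2 then n else n - 1 with hν
    have hνpar : ν % 2 = k % 2 := by
      rw [hν]
      split_ifs with h
      · exact h
      · omega
    have hkν : k ≤ ν := by
      rw [hν]
      split_ifs with h
      · exact hk
      · omega
    have hνn : ν ≤ n := by
      rw [hν]
      split_ifs <;> omega
    have hdegν : Q1.natDegree ≤ ν := by
      rw [hν]
      split_ifs with h
      · exact hdeg1
      · rw [natDegree_le_iff_coeff_eq_zero]
        intro N hN
        rcases eq_or_ne N n with rfl | hNn
        · -- parity: coeff N Q1 = 0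
          have h1 := congrArg (fun p => p.coeff N) hpar1
          simp only [coeff_comp_neg_X, coeff_C_mul] at h1
          have hsgn : ((-1:ℝ))^N = -((-1:ℝ))^k := by
            rcases Nat.even_or_odd N with he | ho
            · have hok : Odd k := by
                rw [Nat.even_iff] at he
                rw [Nat.odd_iff]
                omega
              rw [he.neg_one_pow, hok.neg_one_pow]
              norm_num
            · have hek : Even k := by
                rw [Nat.odd_iff] at ho
                rw [Nat.even_iff]
                omega
              rw [ho.neg_one_pow, hek.neg_one_pow]
          rw [hsgn] at h1
          have h2 : (2:ℝ) * (((-1:ℝ)^k) * Q1.coeff N) = 0 := by linear_combination -h1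
          have h3 : ((-1:ℝ)^k) * Q1.coeff N = 0 := by linarith
          rcases mul_eq_zero.mp h3 with h4 | h4
          · exact absurd h4 (pow_ne_zero _ (by norm_num))
          · exact h4
        · have hlt : Q1.natDegree < N := by omega
          exact coeff_eq_zero_of_natDegree_lt hlt
    have hcore := core hk1 hkν hνpar hdegν hpar1 hM hb1
    rw [hc] at hcore
    have hcheb := cheb_coeff_bound ν k
    calc |Q.coeff k| ≤ |(Chebyshev.T ℝ ν).coeff k| * M := hcore
    _ ≤ ((ν:ℝ)^k / (k.factorial : ℝ)) * M := by
        apply mul_le_mul_of_nonneg_right hcheb hM0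
    _ ≤ (n:ℝ)^k / (k.factorial : ℝ) * M := by
        have hx : ((ν:ℝ))^k ≤ (n:ℝ)^k := by
          apply pow_le_pow_left₀ (Nat.cast_nonneg ν)
          exact_mod_cast hνn
        apply mul_le_mul_of_nonneg_right _ hM0
        exact (div_le_div_iff_of_pos_right (by positivity : (0:ℝ) < (k.factorial:ℝ))).mpr hx

end MarkovAux

theorem markov_coefficient_bound (n : ℕ) (hn : 1 ≤ n) (P : Polynomial ℂ)
    (hP : P.natDegree ≤ n) (k : ℕ) (hk : k ≤ n) :
    ‖P.coeff k‖ ≤ (n : ℝ) ^ k / (Nat.factorial k) *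
      ⨆ x : Icc (-1 : ℝ) 1, ‖P.eval ((x : ℝ) : ℂ)‖ := by
  classical
  set M := ⨆ x : Icc (-1 : ℝ) 1, ‖P.eval ((x : ℝ) : ℂ)‖ with hMdef
  have hcont : Continuous fun y : ℝ => ‖P.eval ((y:ℝ):ℂ)‖ :=
    ((P.continuous).comp Complex.continuous_ofReal).norm
  have hbdd : BddAbove (Set.range fun x : Icc (-1:ℝ) 1 => ‖P.eval ((x:ℝ):ℂ)‖) := by
    have h1 : BddAbove ((fun y : ℝ => ‖P.eval ((y:ℝ):ℂ)‖) '' (Icc (-1:ℝ) 1)) :=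
      isCompact_Icc.bddAbove_image hcont.continuousOn
    rwa [Set.image_eq_range] at h1
  have hle : ∀ y : ℝ, y ∈ Icc (-1:ℝ) 1 → ‖P.eval ((y:ℝ):ℂ)‖ ≤ M := by
    intro y hy
    exact le_ciSup hbdd (⟨y, hy⟩ : Icc (-1:ℝ) 1)
  have hM0 : (0:ℝ) ≤ M :=
    le_trans (norm_nonneg _) (hle 0 (by constructor <;> norm_num))
  rcases eq_or_ne (P.coeff k) 0 with hc0 | hc0
  · rw [hc0, norm_zero]
    positivity
  set c := P.coeff k with hc
  set u : ℂ := (starRingEnd ℂ) c / (‖c‖ : ℂ) with hu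
  have hcnorm : (‖c‖ : ℝ) ≠ 0 := norm_ne_zero_iff.mpr hc0
  have huc : u * c = ((‖c‖ : ℝ) : ℂ) := by
    rw [hu, div_mul_eq_mul_div]
    rw [mul_comm ((starRingEnd ℂ) c) c, Complex.mul_conj]
    rw [Complex.normSq_eq_norm_sq]
    rw [div_eq_iff (by exact_mod_cast hcnorm)]
    push_cast
    ring
  have hunorm : ‖u‖ = 1 := by
    rw [hu, norm_div, RCLike.norm_conj, Complex.norm_real, norm_norm]
    exact div_self hcnorm
  set P' : ℂ[X] := C u * P with hP'
  have hP'c : P'.coeff k = ((‖c‖ : ℝ) : ℂ) := by rw [hP', coeff_C_mul, ← hc, huc]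
  have hP'deg : P'.natDegree ≤ n := le_trans (natDegree_C_mul_le _ _) hP
  have hP'eval : ∀ y : ℂ, P'.eval y = u * P.eval y := by
    intro y
    rw [hP', eval_mul, eval_C]
  set Qre : ℝ[X] := ∑ i ∈ P'.support, C ((P'.coeff i).re) * X^i with hQre
  have hQrecoeff : ∀ j, Qre.coeff j = (P'.coeff j).re := by
    intro j
    rw [hQre, finset_sum_coeff]
    have hterm : ∀ i ∈ P'.support,
        (C ((P'.coeff i).re) * X^i).coeff j = if j = i then (P'.coeff i).re else 0 := by
      intro i _
      rw [coeff_C_mul, coeff_X_pow]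
      split_ifs <;> ring
    rw [Finset.sum_congr rfl hterm, Finset.sum_ite_eq]
    split_ifs with hmem
    · rfl
    · simp [notMem_support_iff.mp hmem]
  have hQreval : ∀ y : ℝ, Qre.eval y = (P'.eval (y:ℂ)).re := by
    intro y
    rw [hQre, eval_finset_sum]
    have h1 : P'.eval (y:ℂ) = ∑ i ∈ P'.support, P'.coeff i * (y:ℂ)^i := by
      rw [Polynomial.eval_eq_sum, Polynomial.sum_def]
    rw [h1, Complex.re_sum]
    apply Finset.sum_congr rfl
    intro i _
    rw [eval_mul, eval_C, eval_pow, eval_X]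
    rw [← Complex.ofReal_pow, Complex.mul_re, Complex.ofReal_re, Complex.ofReal_im]
    ring
  have hQredeg : Qre.natDegree ≤ n := by
    rw [hQre]
    apply natDegree_sum_le_of_forall_le
    intro i hi
    apply le_trans (natDegree_C_mul_le _ _)
    rw [natDegree_X_pow]
    exact le_trans (le_natDegree_of_mem_supp i hi) hP'deg
  have hQreb : ∀ y ∈ Icc (-1:ℝ) 1, |Qre.eval y| ≤ M := by
    intro y hy
    rw [hQreval]
    calc |(P'.eval (y:ℂ)).re| ≤ ‖P'.eval (y:ℂ)‖ := by
          exact Complex.abs_re_le_norm _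
    _ = ‖P.eval (y:ℂ)‖ := by rw [hP'eval, norm_mul, hunorm, one_mul]
    _ ≤ M := hle y hy
  have hfinal := MarkovAux.real_case hn hk hQredeg hM0 hQreb
  rw [hQrecoeff, hP'c, Complex.ofReal_re, abs_of_nonneg (norm_nonneg c)] at hfinal
  exact hfinal
end

section
/- For every β ∈ ℝ \ {0} and every σ > 0, the best uniform approximation on ℝ of the function f_{0,β,c}(x) := cos(β log|x|) (x ≠ 0) by entire functions of exponential type σ equals 1, and the unique-best approximant is the zero function; i.e., A_σ(f_{0,β,c})_∞ = inf_{C∈ℝ} ‖f_{0,β,c} − C‖_{L_∞(ℝ)} = ‖f_{0,β,c}‖_{L_∞(ℝ)} = 1. -/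
open MeasureTheory Set Filter
open scoped ENNReal Topology

/-- The function `cos(β log|x|)`, viewed as a complex-valued function on ℝ. -/
noncomputable def f0c (β : ℝ) (x : ℝ) : ℂ := (Real.cos (β * Real.log |x|) : ℂ)

namespace BernsteinAux

/-- An a.e. bound for a function continuous at a point holds at that point. -/
lemma helper_ae_le {h : ℝ → ℝ} {c : ℝ} (hae : ∀ᵐ x, h x ≤ c) {x₀ : ℝ}
    (hc : ContinuousAt h x₀) : h x₀ ≤ c := by
  by_contra hlt
  push_neg at hlt
  have hmem : {x : ℝ | c < h x} ∈ 𝓝 x₀ := hc.preimage_mem_nhds (Ioi_mem_nhds hlt)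
  have hpos : 0 < volume {x : ℝ | c < h x} :=
    MeasureTheory.Measure.measure_pos_of_mem_nhds _ hmem
  have h0 : volume {x : ℝ | ¬ h x ≤ c} = 0 := hae
  have : volume {x : ℝ | c < h x} = 0 := by
    refine measure_mono_null (fun x hx => ?_) h0
    simpa [not_le] using hx
  simp [this] at hpos

/-- The sample points where `f0c` equals `(-1)^m`. -/
noncomputable def pt (β : ℝ) (m : ℕ) : ℝ := Real.exp (-(m * (Real.pi / |β|)))

lemma pt_pos (β : ℝ) (m : ℕ) : 0 < pt β m := Real.exp_pos _

lemma f0c_pt (β : ℝ) (hβ : β ≠ 0) (m : ℕ) :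
    f0c β (pt β m) = (((-1 : ℝ) ^ m : ℝ) : ℂ) := by
  have hb : (0:ℝ) < |β| := abs_pos.2 hβ
  unfold f0c pt
  rw [abs_of_pos (Real.exp_pos _), Real.log_exp]
  congr 1
  have h1 : β * -((m : ℝ) * (Real.pi / |β|)) = -(((m:ℝ) * Real.pi) * (β / |β|)) := by
    ring
  rw [h1]
  have hcos : Real.cos ((m:ℝ) * Real.pi) = (-1 : ℝ) ^ m := by
    simpa using Real.cos_nat_mul_pi_sub 0 m
  rcases abs_choice β with h | h
  · rw [h, div_self hβ, mul_one, Real.cos_neg, hcos]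
  · rw [h, div_neg, div_self hβ]
    rw [show -((m:ℝ) * Real.pi * -(1:ℝ)) = (m:ℝ) * Real.pi by ring, hcos]

lemma pt_antitone (β : ℝ) (hβ : β ≠ 0) : StrictAnti (pt β) := by
  have hb : (0:ℝ) < |β| := abs_pos.2 hβ
  have hpi : 0 < Real.pi / |β| := div_pos Real.pi_pos hb
  intro m n hmn
  unfold pt
  apply Real.exp_lt_exp.2
  have : (m : ℝ) < n := by exact_mod_cast hmn
  nlinarith

lemma pt_tendsto (β : ℝ) (hβ : β ≠ 0) : Tendsto (pt β) atTop (𝓝 0) := by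
  have hb : (0:ℝ) < |β| := abs_pos.2 hβ
  have hpi : 0 < Real.pi / |β| := div_pos Real.pi_pos hb
  have h1 : Tendsto (fun m : ℕ => (m : ℝ) * (Real.pi / |β|)) atTop atTop :=
    (tendsto_natCast_atTop_atTop).atTop_mul_const hpi
  have h2 : Tendsto (fun m : ℕ => -((m : ℝ) * (Real.pi / |β|))) atTop atBot :=
    tendsto_neg_atBot_iff.2 h1
  exact Real.tendsto_exp_atBot.comp h2

lemma pt_tendsto_comp (β : ℝ) (hβ : β ≠ 0) (a b : ℕ) (ha : 0 < a) :
    Tendsto (fun n : ℕ => pt β (a * n + b)) atTop (𝓝 0) := by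
  exact (pt_tendsto β hβ).comp
    (tendsto_atTop_mono
        (fun n => (Nat.le_mul_of_pos_left n ha).trans (Nat.le_add_right _ _) :
          ∀ n : ℕ, id n ≤ a * n + b)
        tendsto_id)

lemma norm_f0c_le (β : ℝ) (x : ℝ) : ‖f0c β x‖ ≤ 1 := by
  unfold f0c
  rw [Complex.norm_real]
  exact Real.abs_cos_le_one _

lemma continuousAt_f0c (β : ℝ) {x : ℝ} (hx : x ≠ 0) : ContinuousAt (f0c β) x := by
  unfold f0c
  apply Complex.continuous_ofReal.continuousAt.comp
  apply Real.continuous_cos.continuousAt.comp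
  apply (continuousAt_const.mul ?_ : ContinuousAt (fun x : ℝ => β * Real.log |x|) x)
  exact (Real.continuousAt_log (abs_ne_zero.2 hx)).comp continuous_abs.continuousAt

lemma contAt_err (β : ℝ) {g : ℂ → ℂ} (hg : Continuous g) {x : ℝ} (hx : x ≠ 0) :
    ContinuousAt (fun x : ℝ => ‖f0c β x - g x‖) x :=
  ((continuousAt_f0c β hx).sub
    (hg.continuousAt.comp Complex.continuous_ofReal.continuousAt)).norm

/-- Main lower bound: for any continuous `g`, the sup-error is at least 1. -/
lemma one_le_err (β : ℝ) (hβ : β ≠ 0) (g : ℂ → ℂ) (hg : Continuous g) :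
    (1 : ℝ≥0∞) ≤ eLpNorm (fun x : ℝ => f0c β x - g x) ⊤ volume := by
  by_contra hlt
  push_neg at hlt
  rw [eLpNorm_exponent_top] at hlt
  set E := eLpNormEssSup (fun x : ℝ => f0c β x - g x) volume with hE
  have hEtop : E ≠ ⊤ := (hlt.trans (by norm_num)).ne
  set c := E.toReal with hc
  have hc1 : c < 1 := by
    have h := (ENNReal.toReal_lt_toReal hEtop (by norm_num : (1:ℝ≥0∞) ≠ ⊤)).2 hlt
    simpa [hc] using h
  have hae : ∀ᵐ x : ℝ, ‖f0c β x - g x‖ ≤ c := by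
    filter_upwards [ae_le_eLpNormEssSup (f := fun x : ℝ => f0c β x - g x) (μ := volume)]
      with x hx
    have := ENNReal.toReal_mono hEtop hx
    simpa [hc] using this
  set w := g 0 with hw
  have hsum : (2:ℝ) ≤ ‖(1 : ℂ) - w‖ + ‖(-1 : ℂ) - w‖ := by
    calc (2:ℝ) = ‖((1:ℂ) - w) - ((-1:ℂ) - w)‖ := by norm_num
    _ ≤ ‖(1 : ℂ) - w‖ + ‖(-1 : ℂ) - w‖ := norm_sub_le _ _
  obtain ⟨p, hsp⟩ : ∃ p : ℕ, (1:ℝ) ≤ ‖(((-1:ℝ) ^ p : ℝ) : ℂ) - w‖ := by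
    by_contra hcon
    push_neg at hcon
    have h0 := hcon 0
    have h1 := hcon 1
    simp only [pow_zero, pow_one] at h0 h1
    push_cast at h0 h1
    linarith
  set u : ℕ → ℝ := fun n => pt β (2 * n + p) with hu
  have hupos : ∀ n, 0 < u n := fun n => pt_pos β _
  have huval : ∀ n, f0c β (u n) = (((-1:ℝ) ^ p : ℝ) : ℂ) := by
    intro n
    rw [hu, f0c_pt β hβ]
    have e1 : ((-1:ℝ)) ^ (2 * n + p) = (-1:ℝ) ^ p := by
      rw [pow_add, pow_mul]; norm_num
    rw [e1]
  have hutend : Tendsto u atTop (𝓝 0) := pt_tendsto_comp β hβ 2 p two_pos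
  have hgu : Tendsto (fun n => g ((u n : ℝ) : ℂ)) atTop (𝓝 w) := by
    have h1 : Tendsto (fun n => ((u n : ℝ) : ℂ)) atTop (𝓝 0) := by
      have := (Complex.continuous_ofReal.tendsto 0).comp hutend
      simpa [Function.comp_def] using this
    exact (hg.tendsto 0).comp h1
  have hnorm : Tendsto (fun n => ‖(((-1:ℝ) ^ p : ℝ) : ℂ) - g ((u n : ℝ) : ℂ)‖) atTop
      (𝓝 ‖(((-1:ℝ) ^ p : ℝ) : ℂ) - w‖) := (tendsto_const_nhds.sub hgu).norm
  have hev : ∀ᶠ n in atTop, c < ‖(((-1:ℝ) ^ p : ℝ) : ℂ) - g ((u n : ℝ) : ℂ)‖ :=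
    hnorm.eventually (eventually_gt_nhds (lt_of_lt_of_le hc1 hsp))
  obtain ⟨n, hn⟩ := hev.exists
  have hle : ‖f0c β (u n) - g ((u n : ℝ) : ℂ)‖ ≤ c :=
    helper_ae_le hae (contAt_err β hg (hupos n).ne')
  rw [huval n] at hle
  linarith

lemma re_nonneg_of_norm_le {w : ℂ} (h : ‖(1:ℂ) - w‖ ≤ 1) : 0 ≤ w.re := by
  have h2 : Complex.normSq ((1:ℂ) - w) ≤ 1 := by
    have := Complex.sq_norm ((1:ℂ) - w)
    nlinarith [norm_nonneg ((1:ℂ) - w)]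
  rw [Complex.normSq_apply] at h2
  simp only [Complex.sub_re, Complex.one_re, Complex.sub_im, Complex.one_im] at h2
  nlinarith

lemma eq_zero_of_norm_le {w : ℂ} (h : ‖(1:ℂ) - w‖ ≤ 1) (hre : w.re = 0) : w = 0 := by
  have h2 : Complex.normSq ((1:ℂ) - w) ≤ 1 := by
    have := Complex.sq_norm ((1:ℂ) - w)
    nlinarith [norm_nonneg ((1:ℂ) - w)]
  rw [Complex.normSq_apply] at h2
  simp only [Complex.sub_re, Complex.one_re, Complex.sub_im, Complex.one_im, hre] at h2
  have him : w.im = 0 := by nlinarith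
  exact Complex.ext hre him

lemma hasDerivAt_conj_conj {g : ℂ → ℂ} {c z : ℂ} (h : HasDerivAt g c ((starRingEnd ℂ) z)) :
    HasDerivAt (fun w => (starRingEnd ℂ) (g ((starRingEnd ℂ) w))) ((starRingEnd ℂ) c) z := by
  rw [hasDerivAt_iff_tendsto_slope] at h ⊢
  have hconj : Tendsto (starRingEnd ℂ) (𝓝[≠] z) (𝓝[≠] ((starRingEnd ℂ) z)) := by
    apply tendsto_nhdsWithin_of_tendsto_nhds_of_eventually_within
    · exact (Complex.continuous_conj.tendsto z).mono_left nhdsWithin_le_nhds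
    · filter_upwards [self_mem_nhdsWithin] with x hx
      intro hc
      exact hx (by simpa using congrArg (starRingEnd ℂ) hc)
  have hmain := (Complex.continuous_conj.tendsto c).comp (h.comp hconj)
  refine hmain.congr' ?_
  filter_upwards [self_mem_nhdsWithin] with x hx
  simp only [Function.comp_apply, slope_def_field]
  rw [map_div₀, map_sub, map_sub, Complex.conj_conj, Complex.conj_conj]

/-- Uniqueness core: an entire `g` with `‖f0c β x - g x‖ ≤ 1` a.e. vanishes identically. -/
lemma g_eq_zero (β : ℝ) (hβ : β ≠ 0) (g : ℂ → ℂ) (hg : Differentiable ℂ g)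
    (hbd : ∀ᵐ x : ℝ, ‖f0c β x - g x‖ ≤ 1) : ∀ z : ℂ, g z = 0 := by
  have hpt : ∀ x : ℝ, x ≠ 0 → ‖f0c β x - g x‖ ≤ 1 := fun x hx =>
    helper_ae_le hbd (contAt_err β hg.continuous hx)
  -- value bounds at sample points
  have heven : ∀ n : ℕ, ‖(1:ℂ) - g (pt β (2 * n))‖ ≤ 1 := by
    intro n
    have h := hpt (pt β (2 * n)) (pt_pos β _).ne'
    rw [f0c_pt β hβ] at h
    have e1 : (((-1:ℝ) ^ (2*n) : ℝ) : ℂ) = 1 := by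
      push_cast
      rw [pow_mul]
      norm_num
    rwa [e1] at h
  have hodd : ∀ n : ℕ, ‖(1:ℂ) + g (pt β (2 * n + 1))‖ ≤ 1 := by
    intro n
    have h := hpt (pt β (2 * n + 1)) (pt_pos β _).ne'
    rw [f0c_pt β hβ] at h
    have e1 : (((-1:ℝ) ^ (2*n+1) : ℝ) : ℂ) = -1 := by
      push_cast
      rw [pow_add, pow_mul]
      norm_num
    rw [e1, show (-1 : ℂ) - g (pt β (2*n+1)) = -(1 + g (pt β (2*n+1))) by ring,
      norm_neg] at h
    exact h
  have hre_even : ∀ n : ℕ, 0 ≤ (g (pt β (2 * n))).re := fun n =>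
    re_nonneg_of_norm_le (heven n)
  have hre_odd : ∀ n : ℕ, (g (pt β (2 * n + 1))).re ≤ 0 := by
    intro n
    have := re_nonneg_of_norm_le (w := -g (pt β (2*n+1))) (by
      rw [show (1:ℂ) - -g (pt β (2*n+1)) = 1 + g (pt β (2*n+1)) by ring]
      exact hodd n)
    simpa using this
  -- find zeros of Re g between sample points
  have hzero : ∀ n : ℕ, ∃ t ∈ Icc (pt β (2*n+1)) (pt β (2*n)), (g ((t:ℝ) : ℂ)).re = 0 := by
    intro n
    have hlt : pt β (2*n+1) ≤ pt β (2*n) := (pt_antitone β hβ (by omega)).le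
    have hcont : ContinuousOn (fun x : ℝ => (g ((x:ℝ):ℂ)).re)
        (Icc (pt β (2*n+1)) (pt β (2*n))) :=
      ((Complex.continuous_re.comp hg.continuous).comp
        Complex.continuous_ofReal).continuousOn
    have hmem : (0:ℝ) ∈ Icc ((g ((pt β (2*n+1) : ℝ):ℂ)).re) ((g ((pt β (2*n) : ℝ):ℂ)).re) :=
      ⟨hre_odd n, hre_even n⟩
    obtain ⟨t, ht, hteq⟩ := intermediate_value_Icc hlt hcont hmem
    exact ⟨t, ht, hteq⟩
  choose t ht hre using hzero
  have htt : Tendsto t atTop (𝓝 0) := by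
    refine tendsto_of_tendsto_of_tendsto_of_le_of_le (pt_tendsto_comp β hβ 2 1 two_pos)
      (pt_tendsto_comp β hβ 2 0 two_pos) (fun n => (ht n).1) (fun n => ?_)
    simpa using (ht n).2
  have htne : ∀ n, t n ≠ 0 := fun n => (lt_of_lt_of_le (pt_pos _ _) (ht n).1).ne'
  -- the symmetrized function G
  set G : ℂ → ℂ := fun z => g z + (starRingEnd ℂ) (g ((starRingEnd ℂ) z)) with hG
  have hGdiff : Differentiable ℂ G := fun z =>
    (hg z).add (hasDerivAt_conj_conj ((hg ((starRingEnd ℂ) z)).hasDerivAt)).differentiableAt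
  have hGreal : ∀ x : ℝ, G ((x:ℝ):ℂ) = 2 * ((g ((x:ℝ):ℂ)).re : ℂ) := by
    intro x
    simp only [hG, Complex.conj_ofReal]
    rw [Complex.add_conj]
    push_cast
    ring
  have hGz : ∀ n, G ((t n : ℝ) : ℂ) = 0 := by
    intro n
    rw [hGreal, hre n]
    simp
  have hGanalytic : AnalyticOnNhd ℂ G univ :=
    Complex.analyticOnNhd_univ_iff_differentiable.2 hGdiff
  have hfreq : ∃ᶠ z in 𝓝[≠] (0:ℂ), G z = 0 := by
    have h1 : Tendsto (fun n => ((t n : ℝ) : ℂ)) atTop (𝓝[≠] (0:ℂ)) := by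
      apply tendsto_nhdsWithin_of_tendsto_nhds_of_eventually_within
      · have := (Complex.continuous_ofReal.tendsto 0).comp htt
        simpa [Function.comp_def] using this
      · exact Eventually.of_forall fun n => by
          simpa using Complex.ofReal_ne_zero.2 (htne n)
    exact h1.frequently (Frequently.of_forall fun n => hGz n)
  have hG0 : ∀ z, G z = 0 := fun z =>
    hGanalytic.eqOn_zero_of_preconnected_of_frequently_eq_zero isPreconnected_univ
      (mem_univ 0) hfreq (mem_univ z)
  have hgre : ∀ x : ℝ, (g ((x:ℝ):ℂ)).re = 0 := by
    intro x
    have := hG0 ((x:ℝ):ℂ)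
    rw [hGreal] at this
    have h2 : ((g ((x:ℝ):ℂ)).re : ℂ) = 0 := by
      linear_combination this / 2
    exact_mod_cast h2
  -- g vanishes at the even sample points
  have hgz : ∀ n : ℕ, g ((pt β (2*n) : ℝ) : ℂ) = 0 := fun n =>
    eq_zero_of_norm_le (heven n) (hgre _)
  -- identity theorem for g itself
  have hganalytic : AnalyticOnNhd ℂ g univ :=
    Complex.analyticOnNhd_univ_iff_differentiable.2 hg
  have hfreq2 : ∃ᶠ z in 𝓝[≠] (0:ℂ), g z = 0 := by
    have h1 : Tendsto (fun n => ((pt β (2*n) : ℝ) : ℂ)) atTop (𝓝[≠] (0:ℂ)) := by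
      apply tendsto_nhdsWithin_of_tendsto_nhds_of_eventually_within
      · have := (Complex.continuous_ofReal.tendsto 0).comp (pt_tendsto_comp β hβ 2 0 two_pos)
        simpa [Function.comp_def] using this
      · exact Eventually.of_forall fun n => by
          simpa using Complex.ofReal_ne_zero.2 (pt_pos β (2*n)).ne'
    exact h1.frequently (Frequently.of_forall fun n => hgz n)
  exact fun z =>
    hganalytic.eqOn_zero_of_preconnected_of_frequently_eq_zero isPreconnected_univ
      (mem_univ 0) hfreq2 (mem_univ z)

lemma expType_zero (σ : ℝ) : ExpType σ (fun _ => (0:ℂ)) := by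
  refine ⟨differentiable_const 0, fun ε hε => ⟨1, one_pos, fun z => ?_⟩⟩
  simp only [norm_zero, one_mul]
  positivity

end BernsteinAux

open BernsteinAux

theorem bernstein_constant_cos_log (β : ℝ) (hβ : β ≠ 0) (σ : ℝ) (hσ : 0 < σ) :
    Aerr σ (f0c β) ⊤ = 1 ∧
      (⨅ c : ℝ, eLpNorm (fun x : ℝ => f0c β x - (c : ℂ)) ⊤ volume) = 1 ∧
      eLpNorm (f0c β) ⊤ volume = 1 ∧
      ∀ g : ℂ → ℂ, ExpType σ g →
        eLpNorm (fun x : ℝ => f0c β x - g x) ⊤ volume = Aerr σ (f0c β) ⊤ →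
        ∀ z : ℂ, g z = 0 := by
  have hnorm_le : eLpNorm (f0c β) ⊤ volume ≤ 1 := by
    rw [eLpNorm_exponent_top]
    have := eLpNormEssSup_le_of_ae_bound (μ := volume) (C := 1)
      (Eventually.of_forall (norm_f0c_le β))
    simpa using this
  have hnorm : eLpNorm (f0c β) ⊤ volume = 1 := by
    refine le_antisymm hnorm_le ?_
    have := one_le_err β hβ (fun _ => 0) continuous_const
    simpa using this
  have hAerr : Aerr σ (f0c β) ⊤ = 1 := by
    apply le_antisymm
    · refine iInf₂_le_of_le (fun _ => (0:ℂ)) (expType_zero σ) ?_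
      simp only [sub_zero]
      exact hnorm.le
    · exact le_iInf₂ fun g hg => one_le_err β hβ g hg.1.continuous
  refine ⟨hAerr, ?_, hnorm, ?_⟩
  · apply le_antisymm
    · refine iInf_le_of_le 0 ?_
      simp only [Complex.ofReal_zero, sub_zero]
      exact hnorm.le
    · exact le_iInf fun c => one_le_err β hβ (fun _ => (c:ℂ)) continuous_const
  · intro g hg herr z
    rw [hAerr, eLpNorm_exponent_top] at herr
    have hbd : ∀ᵐ x : ℝ, ‖f0c β x - g x‖ ≤ 1 := by
      filter_upwards [ae_le_eLpNormEssSup (f := fun x : ℝ => f0c β x - g x) (μ := volume)]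
        with x hx
      rw [herr] at hx
      have : (‖f0c β x - g x‖₊ : ℝ) ≤ 1 := by
        exact_mod_cast (show (‖f0c β x - g x‖₊ : ℝ≥0∞) ≤ 1 from hx)
      simpa using this
    exact g_eq_zero β hβ g hg.1 hbd z
end
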